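/- Every Laplace pairing c : H⊗H → H is a 2-cocycle: it satisfies the 2-cocycle identity (c∘(m⊗id)) ⋆ c₁₂ = c₂₃ ⋆ (c∘(id⊗m)) in Hom_R(H⊗H⊗H, H), where c₁₂(x⊗y⊗z) = ε(z)·c(x⊗y), c₂₃(x⊗y⊗z) = ε(x)·c(y⊗z), and the convolution on Hom_R(H⊗H⊗H, H) is taken with respect to the tensor-product coalgebra structure of H⊗H⊗H. -/

import Mathlib

open TensorProduct
set_option maxHeartbeats 1000000
set_option synthInstance.maxHeartbeats 400000

noncomputable section

variable (R H : Type*) [CommRing R] [CommRing H] [Bialgebra R H]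

/-- The comultiplication on `H ⊗ H`: `Δ₂ = (id ⊗ sw ⊗ id) ∘ (Δ ⊗ Δ)`. -/
def comul2 : H ⊗[R] H →ₗ[R] (H ⊗[R] H) ⊗[R] (H ⊗[R] H) :=
  (TensorProduct.tensorTensorTensorComm R H H H H).toLinearMap ∘ₗ
    TensorProduct.map Coalgebra.comul Coalgebra.comul

/-- The comultiplication on `H ⊗ (H ⊗ H)` (tensor-product coalgebra structure). -/
def comul3 : H ⊗[R] (H ⊗[R] H) →ₗ[R] (H ⊗[R] (H ⊗[R] H)) ⊗[R] (H ⊗[R] (H ⊗[R] H)) :=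
  (TensorProduct.tensorTensorTensorComm R H H (H ⊗[R] H) (H ⊗[R] H)).toLinearMap ∘ₗ
    TensorProduct.map Coalgebra.comul (comul2 R H)

/-- Convolution product on `Hom_R(H ⊗ H ⊗ H, H)`. -/
def conv3 (f g : H ⊗[R] (H ⊗[R] H) →ₗ[R] H) : H ⊗[R] (H ⊗[R] H) →ₗ[R] H :=
  LinearMap.mul' R H ∘ₗ TensorProduct.map f g ∘ₗ comul3 R H

/-- `a` is a Laplace pairing: `a(x ⊗ yz) = a(x₍₁₎⊗y)·a(x₍₂₎⊗z)` and
`a(xy ⊗ z) = a(x⊗z₍₁₎)·a(y⊗z₍₂₎)`. -/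
def IsLaplace (a : H ⊗[R] H →ₗ[R] H) : Prop :=
  (a ∘ₗ TensorProduct.map LinearMap.id (LinearMap.mul' R H) =
    LinearMap.mul' R H ∘ₗ TensorProduct.map a a ∘ₗ
      (TensorProduct.tensorTensorTensorComm R H H H H).toLinearMap ∘ₗ
      TensorProduct.map Coalgebra.comul LinearMap.id) ∧
  (a ∘ₗ TensorProduct.map (LinearMap.mul' R H) LinearMap.id =
    LinearMap.mul' R H ∘ₗ TensorProduct.map a a ∘ₗ
      (TensorProduct.tensorTensorTensorComm R H H H H).toLinearMap ∘ₗ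
      TensorProduct.map LinearMap.id Coalgebra.comul)

/-- `c ∘ (m ⊗ id)` as a map on `H ⊗ (H ⊗ H)`. -/
def cM1 (c : H ⊗[R] H →ₗ[R] H) : H ⊗[R] (H ⊗[R] H) →ₗ[R] H :=
  c ∘ₗ TensorProduct.map (LinearMap.mul' R H) LinearMap.id ∘ₗ
    (TensorProduct.assoc R H H H).symm.toLinearMap

/-- `c ∘ (id ⊗ m)` as a map on `H ⊗ (H ⊗ H)`. -/
def cM2 (c : H ⊗[R] H →ₗ[R] H) : H ⊗[R] (H ⊗[R] H) →ₗ[R] H :=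
  c ∘ₗ TensorProduct.map LinearMap.id (LinearMap.mul' R H)

/-- `c₁₂(x ⊗ y ⊗ z) = ε(z) • c(x ⊗ y)`. -/
def c12 (c : H ⊗[R] H →ₗ[R] H) : H ⊗[R] (H ⊗[R] H) →ₗ[R] H :=
  (TensorProduct.rid R H).toLinearMap ∘ₗ TensorProduct.map c Coalgebra.counit ∘ₗ
    (TensorProduct.assoc R H H H).symm.toLinearMap

/-- `c₂₃(x ⊗ y ⊗ z) = ε(x) • c(y ⊗ z)`. -/
def c23 (c : H ⊗[R] H →ₗ[R] H) : H ⊗[R] (H ⊗[R] H) →ₗ[R] H :=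
  (TensorProduct.lid R H).toLinearMap ∘ₗ TensorProduct.map Coalgebra.counit c


section Aux
variable {R H : Type*} [CommRing R] [CommRing H] [Bialgebra R H]

lemma sum_bilin_swap {ι : Type*} (B : H →ₗ[R] H →ₗ[R] H) (s : Finset ι) (f g : ι → H)
    (h : (∑ i ∈ s, f i ⊗ₜ[R] g i) = ∑ i ∈ s, g i ⊗ₜ[R] f i) :
    (∑ i ∈ s, B (f i) (g i)) = ∑ i ∈ s, B (g i) (f i) := by
  have h2 := congrArg (TensorProduct.lift B) h
  simp only [map_sum, TensorProduct.lift.tmul] at h2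
  exact h2

lemma repr_counit_right {ι : Type*} (a : H) (r : Coalgebra.Repr R a ι) :
    (∑ i ∈ r.index, Coalgebra.counit (R := R) (r.right i) • r.left i) = a := by
  have h := congrArg (TensorProduct.rid R H) (Coalgebra.sum_tmul_counit_eq r)
  simp only [map_sum, TensorProduct.rid_tmul, one_smul] at h
  exact h

lemma repr_counit_left {ι : Type*} (a : H) (r : Coalgebra.Repr R a ι) :
    (∑ i ∈ r.index, Coalgebra.counit (R := R) (r.left i) • r.right i) = a := by
  have h := congrArg (TensorProduct.lid R H) (Coalgebra.sum_counit_tmul_eq r)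
  simp only [map_sum, TensorProduct.lid_tmul, one_smul] at h
  exact h

lemma repr_swap (hcoc : (TensorProduct.comm R H H).toLinearMap ∘ₗ Coalgebra.comul
      = (Coalgebra.comul : H →ₗ[R] H ⊗[R] H)) {ι : Type*} (a : H) (r : Coalgebra.Repr R a ι) :
    (∑ i ∈ r.index, r.right i ⊗ₜ[R] r.left i) = ∑ i ∈ r.index, r.left i ⊗ₜ[R] r.right i := by
  have h := congrArg (TensorProduct.comm R H H) r.eq
  simp only [map_sum, TensorProduct.comm_tmul] at h
  have h2 := LinearMap.congr_fun hcoc a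
  simp only [LinearMap.comp_apply, LinearEquiv.coe_coe] at h2
  rw [h, h2, ← r.eq]

end Aux

/-- Every Laplace pairing is a 2-cocycle:
`(c∘(m⊗id)) ⋆ c₁₂ = c₂₃ ⋆ (c∘(id⊗m))` in `Hom_R(H ⊗ H ⊗ H, H)`. -/
theorem laplace_is_two_cocycle
    (hcoc : (TensorProduct.comm R H H).toLinearMap ∘ₗ Coalgebra.comul
      = (Coalgebra.comul : H →ₗ[R] H ⊗[R] H))
    (c : H ⊗[R] H →ₗ[R] H) (hc : IsLaplace R H c) :
    conv3 R H (cM1 R H c) (c12 R H c) = conv3 R H (c23 R H c) (cM2 R H c) := by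
  obtain ⟨h1, h2⟩ := hc
  apply TensorProduct.ext'
  intro x yz
  induction yz using TensorProduct.induction_on with
  | zero => simp
  | add u v hu hv => simp only [TensorProduct.tmul_add, map_add, hu, hv]
  | tmul y z =>
  have rx := Coalgebra.Repr.arbitrary R x
  have ry := Coalgebra.Repr.arbitrary R y
  have rz := Coalgebra.Repr.arbitrary R z
  simp only [conv3, comul3, comul2, cM1, cM2, c12, c23, LinearMap.comp_apply,
    LinearEquiv.coe_coe, TensorProduct.map_tmul, LinearMap.id_coe, id_eq]
  rw [← rx.eq, ← ry.eq, ← rz.eq]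
  simp only [TensorProduct.sum_tmul, TensorProduct.tmul_sum, map_sum, Finset.sum_apply,
    TensorProduct.map_tmul, TensorProduct.tensorTensorTensorComm_tmul,
    TensorProduct.assoc_symm_tmul, LinearMap.mul'_apply, TensorProduct.rid_tmul,
    TensorProduct.lid_tmul, LinearMap.id_coe, id_eq, LinearEquiv.coe_coe, LinearMap.comp_apply]
  -- abbreviations
  set εH : H →ₗ[R] R := Coalgebra.counit with hεH
  clear_value εH
  -- Step A: collapse the counit factors
  have collapseL : ∀ u K : H,
      (∑ k ∈ rz.index, c (u ⊗ₜ[R] rz.left k) * εH (rz.right k) • K) = c (u ⊗ₜ[R] z) * K := by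
    intro u K
    have e1 : ∀ k, c (u ⊗ₜ[R] rz.left k) * εH (rz.right k) • K
        = c (u ⊗ₜ[R] (εH (rz.right k) • rz.left k)) * K := by
      intro k
      rw [TensorProduct.tmul_smul, map_smul, smul_mul_assoc, mul_smul_comm]
    rw [Finset.sum_congr rfl fun k _ => e1 k, ← Finset.sum_mul, ← map_sum,
      ← TensorProduct.tmul_sum]
    rw [hεH, repr_counit_right z rz]
  have collapseR : ∀ A w : H,
      (∑ i ∈ rx.index, εH (rx.left i) • A * c (rx.right i ⊗ₜ[R] w)) = A * c (x ⊗ₜ[R] w) := by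
    intro A w
    have e1 : ∀ i, εH (rx.left i) • A * c (rx.right i ⊗ₜ[R] w)
        = A * c ((εH (rx.left i) • rx.right i) ⊗ₜ[R] w) := by
      intro i
      simp only [← TensorProduct.smul_tmul', map_smul, smul_mul_assoc, mul_smul_comm]
    rw [Finset.sum_congr rfl fun i _ => e1 i, ← Finset.mul_sum, ← map_sum,
      ← TensorProduct.sum_tmul]
    rw [hεH, repr_counit_left x rx]
  -- Laplace identities applied pointwise
  have lap2 : ∀ a b : H, c ((a * b) ⊗ₜ[R] z)
      = ∑ k ∈ rz.index, c (a ⊗ₜ[R] rz.left k) * c (b ⊗ₜ[R] rz.right k) := by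
    intro a b
    have h := LinearMap.congr_fun h2 ((a ⊗ₜ[R] b) ⊗ₜ[R] z)
    simp only [LinearMap.comp_apply, TensorProduct.map_tmul, LinearMap.id_coe, id_eq,
      LinearMap.mul'_apply, LinearEquiv.coe_coe] at h
    rw [← rz.eq] at h
    simpa only [TensorProduct.tmul_sum, map_sum,
      TensorProduct.tensorTensorTensorComm_tmul, TensorProduct.map_tmul,
      LinearMap.mul'_apply] using h
  have lap1 : ∀ a b : H, c (x ⊗ₜ[R] (a * b))
      = ∑ i ∈ rx.index, c (rx.left i ⊗ₜ[R] a) * c (rx.right i ⊗ₜ[R] b) := by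
    intro a b
    have h := LinearMap.congr_fun h1 (x ⊗ₜ[R] (a ⊗ₜ[R] b))
    simp only [LinearMap.comp_apply, TensorProduct.map_tmul, LinearMap.id_coe, id_eq,
      LinearMap.mul'_apply, LinearEquiv.coe_coe] at h
    rw [← rx.eq] at h
    simpa only [TensorProduct.sum_tmul, map_sum,
      TensorProduct.tensorTensorTensorComm_tmul, TensorProduct.map_tmul,
      LinearMap.mul'_apply] using h
  -- swap lemmas from cocommutativity
  have xswap : ∀ u v : H,
      (∑ i ∈ rx.index, c (rx.left i ⊗ₜ[R] u) * c (rx.right i ⊗ₜ[R] v))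
      = ∑ i ∈ rx.index, c (rx.right i ⊗ₜ[R] u) * c (rx.left i ⊗ₜ[R] v) := by
    intro u v
    have h := sum_bilin_swap
      ((LinearMap.mul R H).compl₁₂ (c ∘ₗ (TensorProduct.mk R H H).flip u)
        (c ∘ₗ (TensorProduct.mk R H H).flip v))
      rx.index rx.left rx.right (repr_swap hcoc x rx).symm
    simpa only [LinearMap.compl₁₂_apply, LinearMap.mul_apply', LinearMap.comp_apply,
      LinearMap.flip_apply, TensorProduct.mk_apply] using h
  have zswap : ∀ a b : H,
      (∑ k ∈ rz.index, c (a ⊗ₜ[R] rz.left k) * c (b ⊗ₜ[R] rz.right k))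
      = ∑ k ∈ rz.index, c (a ⊗ₜ[R] rz.right k) * c (b ⊗ₜ[R] rz.left k) := by
    intro a b
    have h := sum_bilin_swap
      ((LinearMap.mul R H).compl₁₂ (c ∘ₗ TensorProduct.mk R H H a)
        (c ∘ₗ TensorProduct.mk R H H b))
      rz.index rz.left rz.right (repr_swap hcoc z rz).symm
    simpa only [LinearMap.compl₁₂_apply, LinearMap.mul_apply', LinearMap.comp_apply,
      TensorProduct.mk_apply] using h
  calc
    ∑ k ∈ rz.index, ∑ j ∈ ry.index, ∑ i ∈ rx.index,
        c ((rx.left i * ry.left j) ⊗ₜ[R] rz.left k) *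
          εH (rz.right k) • c (rx.right i ⊗ₜ[R] ry.right j)
      = ∑ j ∈ ry.index, ∑ i ∈ rx.index, ∑ k ∈ rz.index,
          c ((rx.left i * ry.left j) ⊗ₜ[R] rz.left k) *
            εH (rz.right k) • c (rx.right i ⊗ₜ[R] ry.right j) := by
        rw [Finset.sum_comm]
        exact Finset.sum_congr rfl fun j _ => Finset.sum_comm
    _ = ∑ j ∈ ry.index, ∑ i ∈ rx.index,
          c ((rx.left i * ry.left j) ⊗ₜ[R] z) * c (rx.right i ⊗ₜ[R] ry.right j) := by
        exact Finset.sum_congr rfl fun j _ => Finset.sum_congr rfl fun i _ => collapseL _ _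
    _ = ∑ j ∈ ry.index, ∑ i ∈ rx.index, ∑ k ∈ rz.index,
          (c (rx.left i ⊗ₜ[R] rz.left k) * c (ry.left j ⊗ₜ[R] rz.right k)) *
            c (rx.right i ⊗ₜ[R] ry.right j) := by
        refine Finset.sum_congr rfl fun j _ => Finset.sum_congr rfl fun i _ => ?_
        rw [lap2, Finset.sum_mul]
    _ = ∑ j ∈ ry.index, ∑ k ∈ rz.index,
          (∑ i ∈ rx.index, c (rx.left i ⊗ₜ[R] rz.left k) * c (rx.right i ⊗ₜ[R] ry.right j)) *
            c (ry.left j ⊗ₜ[R] rz.right k) := by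
        refine Finset.sum_congr rfl fun j _ => ?_
        rw [Finset.sum_comm]
        refine Finset.sum_congr rfl fun k _ => ?_
        rw [Finset.sum_mul]
        exact Finset.sum_congr rfl fun i _ => by ring
    _ = ∑ j ∈ ry.index, ∑ k ∈ rz.index,
          (∑ i ∈ rx.index, c (rx.right i ⊗ₜ[R] rz.left k) * c (rx.left i ⊗ₜ[R] ry.right j)) *
            c (ry.left j ⊗ₜ[R] rz.right k) := by
        exact Finset.sum_congr rfl fun j _ => Finset.sum_congr rfl fun k _ => by rw [xswap]
    _ = ∑ j ∈ ry.index, ∑ i ∈ rx.index,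
          (∑ k ∈ rz.index, c (rx.right i ⊗ₜ[R] rz.left k) * c (ry.left j ⊗ₜ[R] rz.right k)) *
            c (rx.left i ⊗ₜ[R] ry.right j) := by
        refine Finset.sum_congr rfl fun j _ => ?_
        simp only [Finset.sum_mul]
        rw [Finset.sum_comm]
        exact Finset.sum_congr rfl fun i _ => Finset.sum_congr rfl fun k _ => by ring
    _ = ∑ j ∈ ry.index, ∑ i ∈ rx.index,
          (∑ k ∈ rz.index, c (rx.right i ⊗ₜ[R] rz.right k) * c (ry.left j ⊗ₜ[R] rz.left k)) *
            c (rx.left i ⊗ₜ[R] ry.right j) := by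
        exact Finset.sum_congr rfl fun j _ => Finset.sum_congr rfl fun i _ => by rw [zswap]
    _ = ∑ k ∈ rz.index, ∑ j ∈ ry.index,
          c (ry.left j ⊗ₜ[R] rz.left k) * c (x ⊗ₜ[R] (ry.right j * rz.right k)) := by
        symm
        refine Eq.trans (Finset.sum_congr rfl fun k _ => Finset.sum_congr rfl fun j _ => by
          rw [lap1, Finset.mul_sum]) ?_
        rw [Finset.sum_comm]
        refine Finset.sum_congr rfl fun j _ => ?_
        rw [Finset.sum_comm]
        refine Finset.sum_congr rfl fun i _ => ?_
        rw [Finset.sum_mul]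
        exact Finset.sum_congr rfl fun k _ => by ring
    _ = ∑ k ∈ rz.index, ∑ j ∈ ry.index, ∑ i ∈ rx.index,
          εH (rx.left i) • c (ry.left j ⊗ₜ[R] rz.left k) *
            c (rx.right i ⊗ₜ[R] (ry.right j * rz.right k)) := by
        exact Finset.sum_congr rfl fun k _ => Finset.sum_congr rfl fun j _ =>
          (collapseR _ _).symm
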